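/- Let G be a simple undirected connected graph with n ≥ 2 vertices and α ∈ [0,1]. Then the α-distance Estrada index satisfies DEE_α(G) ≥ √( n + 4αW(G) + n(n−1)·e^{4αW(G)/n} ). -/

import Mathlib

open Finset Matrix Polynomial Real

/-- Distance matrix of a graph on `Fin n`: `(i,j)` entry is the graph distance. -/
noncomputable def distMatrix {n : ℕ} (G : SimpleGraph (Fin n)) : Matrix (Fin n) (Fin n) ℝ :=
  fun i j => (G.dist i j : ℝ)

/-- Transmission of a vertex: sum of distances to all other vertices. -/
noncomputable def transmission {n : ℕ} (G : SimpleGraph (Fin n)) (i : Fin n) : ℝ :=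
  ∑ j, (G.dist i j : ℝ)

/-- The α-distance matrix `D_α(G) = α·Tr(G) + (1-α)·D(G)`. -/
noncomputable def alphaDistMatrix {n : ℕ} (G : SimpleGraph (Fin n)) (α : ℝ) : Matrix (Fin n) (Fin n) ℝ :=
  α • Matrix.diagonal (transmission G) + (1 - α) • distMatrix G

/-- Wiener index `W(G) = (1/2)·∑_{i≠j} d(v_i,v_j)`. -/
noncomputable def wiener {n : ℕ} (G : SimpleGraph (Fin n)) : ℝ :=
  (1 / 2) * ∑ i, ∑ j, (G.dist i j : ℝ)

/-- Frobenius norm of a real matrix. -/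
noncomputable def frobNorm {n : ℕ} (M : Matrix (Fin n) (Fin n) ℝ) : ℝ :=
  Real.sqrt (∑ i, ∑ j, (M i j) ^ 2)

lemma trace_eq_sum_eig {n : ℕ} {A : Matrix (Fin n) (Fin n) ℝ} (hA : A.IsHermitian) :
    A.trace = ∑ i, hA.eigenvalues i := by
  conv_lhs => rw [hA.spectral_theorem, Unitary.conjStarAlgAut_apply]
  rw [Matrix.trace_mul_cycle,
    (Matrix.mem_unitaryGroup_iff').mp (Matrix.IsHermitian.eigenvectorUnitary hA).2, Matrix.one_mul,
    Matrix.trace_diagonal]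
  simp

lemma key_estrada {n : ℕ} (hn : 2 ≤ n) (f : Fin n → ℝ) :
    Real.sqrt ((n : ℝ) + 2 * (∑ i, f i) +
        (n : ℝ) * ((n : ℝ) - 1) * Real.exp (2 * (∑ i, f i) / n)) ≤
      ∑ i, Real.exp (f i) := by
  set T : ℝ := ∑ i, f i with hT
  set S : ℝ := ∑ i, Real.exp (f i) with hS
  have hS0 : 0 ≤ S := Finset.sum_nonneg fun i _ => (Real.exp_pos _).le
  have hnR : (0:ℝ) < n := by positivity
  rw [show S = Real.sqrt (S ^ 2) by rw [Real.sqrt_sq hS0]]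
  apply Real.sqrt_le_sqrt
  set c : ℝ := 2 * T / n with hc
  have hnc : (n : ℝ) * c = 2 * T := by rw [hc]; field_simp [hnR.ne']
  have haffine : ∀ a b : ℝ, ∑ i : Fin n, (a + b * f i) = n * a + b * T := by
    intro a b
    rw [Finset.sum_add_distrib, ← Finset.mul_sum, Finset.sum_const]
    simp [hT, nsmul_eq_mul]
  have hsq : S ^ 2 = ∑ i, Real.exp (2 * f i) +
      ∑ i, ∑ j ∈ Finset.univ.erase i, Real.exp (f i + f j) := by
    rw [sq, hS, Finset.sum_mul_sum]
    rw [← Finset.sum_add_distrib]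
    refine Finset.sum_congr rfl fun i _ => ?_
    rw [← Finset.add_sum_erase _ _ (Finset.mem_univ i), ← Real.exp_add, two_mul]
    refine congrArg _ (Finset.sum_congr rfl fun j _ => ?_)
    rw [← Real.exp_add]
  rw [hsq]
  have h1 : (n : ℝ) + 2 * T ≤ ∑ i, Real.exp (2 * f i) := by
    calc (n : ℝ) + 2 * T = ∑ i : Fin n, (1 + 2 * f i) := (haffine 1 2).symm ▸ by ring
      _ ≤ ∑ i, Real.exp (2 * f i) :=
          Finset.sum_le_sum fun i _ => by
            have := Real.add_one_le_exp (2 * f i); linarith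
  have h2 : (n : ℝ) * ((n : ℝ) - 1) * Real.exp c ≤
      ∑ i, ∑ j ∈ Finset.univ.erase i, Real.exp (f i + f j) := by
    have step : ∀ i j : Fin n, Real.exp c * (1 + (f i + f j - c)) ≤ Real.exp (f i + f j) := by
      intro i j
      have h := Real.add_one_le_exp (f i + f j - c)
      calc Real.exp c * (1 + (f i + f j - c)) ≤ Real.exp c * Real.exp (f i + f j - c) := by
            nlinarith [Real.exp_pos c]
        _ = Real.exp (f i + f j) := by rw [← Real.exp_add]; ring_nf
    have hcard : ∀ i : Fin n, ((Finset.univ.erase i).card : ℝ) = (n : ℝ) - 1 := by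
      intro i
      rw [Finset.card_erase_of_mem (Finset.mem_univ i)]
      simp [Nat.cast_sub (by omega : 1 ≤ n)]
    have hsum : ∀ i : Fin n, ∑ j ∈ Finset.univ.erase i, f j = T - f i := by
      intro i; rw [hT, Finset.sum_erase_eq_sub (Finset.mem_univ i)]
    have inner_eq : ∀ i : Fin n,
        ∑ j ∈ Finset.univ.erase i, Real.exp c * (1 + (f i + f j - c))
          = Real.exp c * ((((n:ℝ) - 1) * (1 + f i - c) + T) + (-1) * f i) := by
      intro i
      rw [← Finset.mul_sum]
      congr 1
      have : ∀ j ∈ Finset.univ.erase i, 1 + (f i + f j - c) = (1 + f i - c) + f j :=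
        fun j _ => by ring
      rw [Finset.sum_congr rfl this, Finset.sum_add_distrib, Finset.sum_const, hsum i,
        nsmul_eq_mul, hcard i]
      ring
    calc (n : ℝ) * ((n : ℝ) - 1) * Real.exp c
        = ∑ i : Fin n, ∑ j ∈ Finset.univ.erase i, Real.exp c * (1 + (f i + f j - c)) := by
          rw [Finset.sum_congr rfl fun i _ => inner_eq i, ← Finset.mul_sum]
          have hhh : ∀ i : Fin n, ((((n:ℝ) - 1) * (1 + f i - c) + T) + (-1) * f i)
              = ((((n:ℝ) - 1) * (1 - c) + T) + ((n:ℝ) - 2) * f i) := fun i => by ring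
          rw [Finset.sum_congr rfl fun i _ => hhh i, haffine]
          linear_combination ((n:ℝ) - 1) * Real.exp c * hnc
      _ ≤ ∑ i, ∑ j ∈ Finset.univ.erase i, Real.exp (f i + f j) :=
          Finset.sum_le_sum fun i _ => Finset.sum_le_sum fun j _ => step i j
  linarith

theorem stmt_15 {n : ℕ} (hn : 2 ≤ n) (G : SimpleGraph (Fin n)) (hG : G.Connected)
    (α : ℝ) (hα : α ∈ Set.Icc (0 : ℝ) 1)
    (hA : (alphaDistMatrix G α).IsHermitian) :
    Real.sqrt ((n : ℝ) + 4 * α * wiener G +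
        (n : ℝ) * ((n : ℝ) - 1) * Real.exp (4 * α * wiener G / n)) ≤
      ∑ i, Real.exp (hA.eigenvalues i) := by
  have htr : ∑ i, hA.eigenvalues i = 2 * α * wiener G := by
    rw [← trace_eq_sum_eig hA]
    unfold alphaDistMatrix Matrix.trace wiener
    simp only [Matrix.diag_apply, Matrix.add_apply, Matrix.smul_apply, Matrix.diagonal_apply_eq,
      smul_eq_mul, distMatrix, SimpleGraph.dist_self, Nat.cast_zero, mul_zero, add_zero]
    rw [← Finset.mul_sum]
    unfold transmission
    ring
  have := key_estrada hn hA.eigenvalues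
  rw [htr] at this
  convert this using 3 <;> ring
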